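/- Optimality certificate for the PT model: if (π, Q, P) is PT-dual-feasible, (v, u) is PT-primal-feasible with goal price τ, and the objective values coincide, i.e. τ·(∑_{i∈I} Q i + ∑_{r∈R} P r) = ∑_{i∈I} v i · X i o − ∑_{r∈R} u r · Y r o, then (π, Q, P) maximizes τ·(∑_i Q' i + ∑_r P' r) over all PT-dual-feasible triples (π', Q', P') and (v, u) minimizes ∑_i v' i · X i o − ∑_r u' r · Y r o over all PT-primal-feasible pairs (v', u'). -/
import Mathlib


open Finset

/-- A triple `(π, Q, P)` is PT-dual-feasible. -/
def PTDualFeasible {I R J : Type*} [Fintype I] [Fintype R] [Fintype J]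
    (X : I → J → ℝ) (Y : R → J → ℝ) (o : J)
    (π : J → ℝ) (Q : I → ℝ) (P : R → ℝ) : Prop :=
  (∀ j, 0 ≤ π j) ∧ (∀ i, 0 ≤ Q i) ∧ (∀ r, 0 ≤ P r) ∧
  (∀ i, (∑ j, X i j * π j) + Q i * X i o = X i o) ∧
  (∀ r, -(∑ j, Y r j * π j) + P r * Y r o = -(Y r o))

/-- A pair `(v, u)` is PT-primal-feasible with goal price `τ`. -/
def PTPrimalFeasible {I R J : Type*} [Fintype I] [Fintype R] [Fintype J]
    (X : I → J → ℝ) (Y : R → J → ℝ) (o : J) (τ : ℝ)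
    (v : I → ℝ) (u : R → ℝ) : Prop :=
  (∀ j, 0 ≤ (∑ i, v i * X i j) - ∑ r, u r * Y r j) ∧
  (∀ i, τ ≤ X i o * v i) ∧ (∀ r, τ ≤ Y r o * u r)

lemma pt_weak_duality
    {I R J : Type*} [Fintype I] [Fintype R] [Fintype J]
    (X : I → J → ℝ) (Y : R → J → ℝ) (o : J) (τ : ℝ)
    (π' : J → ℝ) (Q' : I → ℝ) (P' : R → ℝ)
    (hd : PTDualFeasible X Y o π' Q' P')
    (v : I → ℝ) (u : R → ℝ)
    (hp : PTPrimalFeasible X Y o τ v u) :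
    τ * ((∑ i, Q' i) + ∑ r, P' r) ≤ (∑ i, v i * X i o) - ∑ r, u r * Y r o := by
  obtain ⟨hπ', hQ', hP', hin, hout⟩ := hd
  obtain ⟨hj, hvi, hur⟩ := hp
  have A : ∑ j, π' j * ∑ i, v i * X i j = ∑ i, v i * ∑ j, X i j * π' j := by
    simp_rw [Finset.mul_sum]
    rw [Finset.sum_comm]
    exact Finset.sum_congr rfl fun i _ => Finset.sum_congr rfl fun j _ => by ring
  have B : ∑ j, π' j * ∑ r, u r * Y r j = ∑ r, u r * ∑ j, Y r j * π' j := by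
    simp_rw [Finset.mul_sum]
    rw [Finset.sum_comm]
    exact Finset.sum_congr rfl fun r _ => Finset.sum_congr rfl fun j _ => by ring
  have h1 : ∑ i, v i * X i o
      = (∑ i, v i * ∑ j, X i j * π' j) + ∑ i, Q' i * (X i o * v i) := by
    rw [← Finset.sum_add_distrib]
    exact Finset.sum_congr rfl fun i _ => by linear_combination (-(v i)) * hin i
  have h2 : ∑ r, u r * Y r o
      = (∑ r, u r * ∑ j, Y r j * π' j) - ∑ r, P' r * (Y r o * u r) := by
    rw [← Finset.sum_sub_distrib]
    exact Finset.sum_congr rfl fun r _ => by linear_combination (u r) * hout r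
  have key : (∑ i, v i * X i o) - (∑ r, u r * Y r o)
      = (∑ j, π' j * ((∑ i, v i * X i j) - ∑ r, u r * Y r j))
        + ((∑ i, Q' i * (X i o * v i)) + ∑ r, P' r * (Y r o * u r)) := by
    simp_rw [mul_sub, Finset.sum_sub_distrib]
    rw [A, B, h1, h2]
    ring
  rw [key]
  have t1 : 0 ≤ ∑ j, π' j * ((∑ i, v i * X i j) - ∑ r, u r * Y r j) :=
    Finset.sum_nonneg fun j _ => mul_nonneg (hπ' j) (hj j)
  have t2 : ∑ i, τ * Q' i ≤ ∑ i, Q' i * (X i o * v i) :=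
    Finset.sum_le_sum fun i _ => by
      rw [mul_comm]
      exact mul_le_mul_of_nonneg_left (hvi i) (hQ' i)
  have t3 : ∑ r, τ * P' r ≤ ∑ r, P' r * (Y r o * u r) :=
    Finset.sum_le_sum fun r _ => by
      rw [mul_comm]
      exact mul_le_mul_of_nonneg_left (hur r) (hP' r)
  have : τ * ((∑ i, Q' i) + ∑ r, P' r) = (∑ i, τ * Q' i) + ∑ r, τ * P' r := by
    simp [Finset.mul_sum, mul_add]
  linarith

/-- Optimality certificate for the PT model. -/
theorem pt_optimality_certificate
    {I R J : Type*} [Fintype I] [Fintype R] [Fintype J]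
    [Nonempty I] [Nonempty R] [Nonempty J]
    (X : I → J → ℝ) (Y : R → J → ℝ)
    (hX : ∀ i j, 0 < X i j) (hY : ∀ r j, 0 < Y r j)
    (o : J) (τ : ℝ) (hτ : 0 < τ)
    (π : J → ℝ) (Q : I → ℝ) (P : R → ℝ)
    (hdual : PTDualFeasible X Y o π Q P)
    (v : I → ℝ) (u : R → ℝ)
    (hprimal : PTPrimalFeasible X Y o τ v u)
    (heq : τ * ((∑ i, Q i) + ∑ r, P r)
      = (∑ i, v i * X i o) - ∑ r, u r * Y r o) :
    (∀ (π' : J → ℝ) (Q' : I → ℝ) (P' : R → ℝ),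
        PTDualFeasible X Y o π' Q' P' →
        τ * ((∑ i, Q' i) + ∑ r, P' r) ≤ τ * ((∑ i, Q i) + ∑ r, P r)) ∧
    (∀ (v' : I → ℝ) (u' : R → ℝ),
        PTPrimalFeasible X Y o τ v' u' →
        (∑ i, v i * X i o) - (∑ r, u r * Y r o)
          ≤ (∑ i, v' i * X i o) - ∑ r, u' r * Y r o) := by
  refine ⟨fun π' Q' P' hd' => ?_, fun v' u' hp' => ?_⟩
  · rw [heq]
    exact pt_weak_duality X Y o τ π' Q' P' hd' v u hprimal
  · rw [← heq]
    exact pt_weak_duality X Y o τ π Q P hdual v' u' hp'
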